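/- For multi-winner approval voting, PJR does not imply IPSC: in the instance with 12 voters where voters 1–3 approve {a,x}, voters 4–6 approve {a,y}, and voters 7–12 approve {u,v,w,x,y,z}, with k = 6, the committee {u,v,w,x,y,z} satisfies PJR but violates IPSC. -/
import Mathlib


open Finset
open scoped Classical

noncomputable section

/-- Each voter's weak preference relation `pref i` is a total preorder. -/
def TotalPreorder {V C : Type} (pref : V → C → C → Prop) : Prop :=
  (∀ i a b, pref i a b ∨ pref i b a) ∧
  (∀ i a b c, pref i a b → pref i b c → pref i a c)

/-- `nth i j` is voter `i`'s `(j+1)`-th most preferred candidate under a fixed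
tie-breaking: an enumeration of all candidates consistent with `pref i`. -/
def TieBreak {V C : Type} [Fintype C] (pref : V → C → C → Prop) (nth : V → ℕ → C) : Prop :=
  (∀ i c, ∃ j, j < Fintype.card C ∧ nth i j = c) ∧
  (∀ i j j', j ≤ j' → pref i (nth i j) (nth i j'))

/-- `N'` solidly supports `C'`: every voter in `N'` weakly prefers every member of `C'`
to every non-member. -/
def Solid {V C : Type} (pref : V → C → C → Prop) (N' : Finset V) (C' : Finset C) : Prop :=
  ∀ i ∈ N', ∀ c' ∈ C', ∀ c, c ∉ C' → pref i c' c

/-- `P(N',C') = {c : ∃ i ∈ N', c ≿_i c^{(i,|C'|)}}` where `c^{(i,j)} = nth i (j-1)`. -/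
def Pset {V C : Type} [Fintype C] (pref : V → C → C → Prop) (nth : V → ℕ → C)
    (N' : Finset V) (C' : Finset C) : Finset C :=
  Finset.univ.filter fun c => ∃ i ∈ N', pref i c (nth i (C'.card - 1))

/-- total cost of a set of candidates -/
def cost {C : Type} (w : C → ℝ) (S : Finset C) : ℝ := ∑ c ∈ S, w c

/-- Comparative PSC for PB with general (weak) preferences. -/
def CPSC {V C : Type} [Fintype V] [Fintype C] (pref : V → C → C → Prop) (nth : V → ℕ → C)
    (b : V → ℝ) (w : C → ℝ) (L : ℝ) (W : Finset C) : Prop :=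
  ¬ ∃ (N' : Finset V) (C' : Finset C), Solid pref N' C' ∧
      cost w (Pset pref nth N' C' ∩ W) < (∑ i ∈ N', b i) * L / (Fintype.card V : ℝ) ∧
      ∃ C'' ⊆ C', cost w (Pset pref nth N' C' ∩ W) < cost w C'' ∧
        cost w C'' ≤ (∑ i ∈ N', b i) * L / (Fintype.card V : ℝ)

/-- Inclusion PSC for PB with general (weak) preferences. -/
def IPSC {V C : Type} [Fintype V] [Fintype C] (pref : V → C → C → Prop) (nth : V → ℕ → C)
    (b : V → ℝ) (w : C → ℝ) (L : ℝ) (W : Finset C) : Prop :=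
  ¬ ∃ (N' : Finset V) (C' : Finset C), Solid pref N' C' ∧
      cost w (Pset pref nth N' C' ∩ W) < (∑ i ∈ N', b i) * L / (Fintype.card V : ℝ) ∧
      ∃ c ∈ C', c ∉ Pset pref nth N' C' ∩ W ∧
        cost w (insert c (Pset pref nth N' C' ∩ W)) ≤ (∑ i ∈ N', b i) * L / (Fintype.card V : ℝ)

/-- `W` is exhaustive w.r.t. budget limit `L`. -/
def Exhaustive {C : Type} (w : C → ℝ) (L : ℝ) (W : Finset C) : Prop :=
  cost w W ≤ L ∧ ∀ c, c ∉ W → L < cost w (insert c W)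

/-- `W` is a maximal cost outcome w.r.t. budget limit `L`. -/
def MaximalCost {C : Type} (w : C → ℝ) (L : ℝ) (W : Finset C) : Prop :=
  cost w W ≤ L ∧ ∀ C' : Finset C, cost w C' ≤ L → cost w C' ≤ cost w W

/-- dichotomous preferences with approval sets `A i` -/
def Dichotomous {V C : Type} (pref : V → C → C → Prop) (A : V → Finset C) : Prop :=
  ∀ i a c, pref i a c ↔ (a ∈ A i ∨ c ∉ A i)

/-- `⋃_{i ∈ N'} A i` -/
def unionA {V C : Type} [Fintype C] (A : V → Finset C) (N' : Finset V) : Finset C :=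
  Finset.univ.filter fun c => ∃ i ∈ N', c ∈ A i

/-- `⋂_{i ∈ N'} A i` -/
def interA {V C : Type} [Fintype C] (A : V → Finset C) (N' : Finset V) : Finset C :=
  Finset.univ.filter fun c => ∀ i ∈ N', c ∈ A i

/-- Proportional Justified Representation for multi-winner approval voting. -/
def PJR {V C : Type} [Fintype V] [Fintype C] (A : V → Finset C) (k : ℕ) (W : Finset C) : Prop :=
  ∀ ℓ : ℕ, 0 < ℓ → ℓ ≤ k →
    ¬ ∃ Ns : Finset V, (ℓ * Fintype.card V : ℝ) / k ≤ Ns.card ∧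
      ℓ ≤ (interA A Ns).card ∧ (unionA A Ns ∩ W).card < ℓ

/-- Extended Justified Representation for multi-winner approval voting. -/
def EJR {V C : Type} [Fintype V] [Fintype C] (A : V → Finset C) (k : ℕ) (W : Finset C) : Prop :=
  ∀ ℓ : ℕ, 0 < ℓ → ℓ ≤ k →
    ¬ ∃ Ns : Finset V, (ℓ * Fintype.card V : ℝ) / k ≤ Ns.card ∧
      ℓ ≤ (interA A Ns).card ∧ ∀ i ∈ Ns, (A i ∩ W).card < ℓ

/-- IPSC in its approval-ballot form. -/
def IPSCapp {V C : Type} [Fintype V] [Fintype C] (A : V → Finset C)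
    (b : V → ℝ) (w : C → ℝ) (L : ℝ) (W : Finset C) : Prop :=
  Exhaustive w L W ∧
  ¬ ∃ N' : Finset V,
      cost w (unionA A N' ∩ W) < (∑ i ∈ N', b i) * L / (Fintype.card V : ℝ) ∧
      ∃ c ∈ interA A N', c ∉ unionA A N' ∩ W ∧
        cost w (insert c (unionA A N' ∩ W)) ≤ (∑ i ∈ N', b i) * L / (Fintype.card V : ℝ)

/-- candidates a=0, u=1, v=2, w=3, x=4, y=5, z=6; voters 1-3 approve {a,x},
voters 4-6 approve {a,y}, voters 7-12 approve {u,v,w,x,y,z}. -/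
def A12 : Fin 12 → Finset (Fin 7) := fun i =>
  if (i : ℕ) < 3 then {0, 4} else if (i : ℕ) < 6 then {0, 5} else {1, 2, 3, 4, 5, 6}


private lemma deq_eq {α : Type} (i1 i2 : DecidableEq α) : i1 = i2 := by
  funext a b
  exact Subsingleton.elim _ _

private lemma inter_inst {α : Type} {i1 : DecidableEq α} (i2 : DecidableEq α) (s t : Finset α) :
    @Inter.inter (Finset α) (@Finset.instInter α i1) s t
      = @Inter.inter (Finset α) (@Finset.instInter α i2) s t := by
  rw [deq_eq i1 i2]

private lemma insert_inst {α : Type} {i1 : DecidableEq α} (i2 : DecidableEq α) (a : α)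
    (s : Finset α) :
    @Insert.insert α (Finset α) (@Finset.instInsert α i1) a s
      = @Insert.insert α (Finset α) (@Finset.instInsert α i2) a s := by
  rw [deq_eq i1 i2]

/-- with k = 6, the committee {u,v,w,x,y,z} satisfies PJR but
violates IPSC. -/
theorem pjr_not_implies_ipsc :
    PJR A12 6 ({1, 2, 3, 4, 5, 6} : Finset (Fin 7)) ∧
    ¬ IPSCapp A12 (fun _ => (1 : ℝ)) (fun _ => (1 : ℝ)) 6
        ({1, 2, 3, 4, 5, 6} : Finset (Fin 7)) := by
  constructor
  · -- PJR
    intro ℓ hpos hle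
    rintro ⟨Ns, h1, h2, h3⟩
    rw [inter_inst (instDecidableEqFin 7)] at h3
    -- convert the real inequality to a natural-number one
    have hcard : 2 * ℓ ≤ Ns.card := by
      rw [Fintype.card_fin] at h1
      have : ((2 * ℓ : ℕ) : ℝ) ≤ (Ns.card : ℝ) := by push_cast; linarith
      exact_mod_cast this
    have hinter : ∀ i ∈ Ns, interA A12 Ns ⊆ A12 i := by
      intro i hi c hc
      simp only [interA, Finset.mem_filter] at hc
      exact hc.2 i hi
    by_cases hC : ∃ i ∈ Ns, 6 ≤ (i : ℕ)
    · -- a voter of the third type is in Ns: union ∩ W ⊇ W, card 6 ≥ ℓ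
      obtain ⟨i, hi, hi6⟩ := hC
      have hn3 : ¬ (i : ℕ) < 3 := by omega
      have hn6 : ¬ (i : ℕ) < 6 := by omega
      have hA : A12 i = {1, 2, 3, 4, 5, 6} := by simp [A12, hn3, hn6]
      have hsub : ({1, 2, 3, 4, 5, 6} : Finset (Fin 7)) ⊆
          unionA A12 Ns ∩ ({1, 2, 3, 4, 5, 6} : Finset (Fin 7)) := by
        intro c hc
        refine Finset.mem_inter.mpr ⟨?_, hc⟩
        simp only [unionA, Finset.mem_filter, Finset.mem_univ, true_and]
        exact ⟨i, hi, by rw [hA]; exact hc⟩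
      have h6 : 6 ≤ (unionA A12 Ns ∩ ({1, 2, 3, 4, 5, 6} : Finset (Fin 7))).card := by
        calc (6 : ℕ) = ({1, 2, 3, 4, 5, 6} : Finset (Fin 7)).card := by decide
        _ ≤ _ := Finset.card_le_card hsub
      omega
    · push_neg at hC
      rcases Nat.lt_or_ge ℓ 2 with hℓ1 | hℓ2
      · -- ℓ = 1 : Ns nonempty, any voter approves someone in W
        interval_cases ℓ
        have hne : Ns.Nonempty := Finset.card_pos.mp (by omega)
        obtain ⟨i, hi⟩ := hne
        have hiw : ∃ c : Fin 7, c ∈ A12 i ∧ c ∈ ({1, 2, 3, 4, 5, 6} : Finset (Fin 7)) := by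
          by_cases h3' : (i : ℕ) < 3
          · exact ⟨4, by simp [A12, h3'], by decide⟩
          · exact ⟨5, by simp [A12, h3', hC i hi], by decide⟩
        obtain ⟨c, hc1, hc2⟩ := hiw
        have hmem : c ∈ unionA A12 Ns ∩ ({1, 2, 3, 4, 5, 6} : Finset (Fin 7)) := by
          refine Finset.mem_inter.mpr ⟨?_, hc2⟩
          simp only [unionA, Finset.mem_filter, Finset.mem_univ, true_and]
          exact ⟨i, hi, hc1⟩
        have := Finset.card_pos.mpr ⟨c, hmem⟩
        omega
      · by_cases hAB : (∃ i ∈ Ns, (i : ℕ) < 3) ∧ (∃ j ∈ Ns, 3 ≤ (j : ℕ) ∧ (j : ℕ) < 6)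
        · -- both ballot types present : interA ⊆ {0}
          obtain ⟨⟨i, hi, hi3⟩, ⟨j, hj, hj3, hj6⟩⟩ := hAB
          have hsub : interA A12 Ns ⊆ ({0} : Finset (Fin 7)) := by
            intro c hc
            have hci := hinter i hi hc
            have hcj := hinter j hj hc
            have hjn : ¬ (j : ℕ) < 3 := by omega
            simp only [A12, if_pos hi3] at hci
            simp only [A12, if_neg hjn, if_pos hj6] at hcj
            simp only [Finset.mem_insert, Finset.mem_singleton] at hci hcj ⊢
            rcases hci with rfl | rfl
            · rfl
            · rcases hcj with h' | h' <;> exact absurd h' (by decide)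
          have hle1 : (interA A12 Ns).card ≤ 1 :=
            le_trans (Finset.card_le_card hsub) (by decide)
          omega
        · rw [not_and_or] at hAB
          push_neg at hAB
          have hsmall : Ns.card ≤ 3 := by
            rcases hAB with h | h
            · have hsub : Ns ⊆ ({3, 4, 5} : Finset (Fin 12)) := by
                intro i hi
                have h6 := hC i hi
                have h3' := h i hi
                fin_cases i <;> first | decide | simp_all
              calc Ns.card ≤ ({3, 4, 5} : Finset (Fin 12)).card := Finset.card_le_card hsub
              _ = 3 := by decide
            · have hsub : Ns ⊆ ({0, 1, 2} : Finset (Fin 12)) := by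
                intro i hi
                have h6 := hC i hi
                have h3' := h i hi
                fin_cases i <;> first | decide | simp_all
              calc Ns.card ≤ ({0, 1, 2} : Finset (Fin 12)).card := Finset.card_le_card hsub
              _ = 3 := by decide
          omega
  · -- ¬ IPSC
    intro hI
    apply hI.2
    refine ⟨({0, 1, 2, 3, 4, 5} : Finset (Fin 12)), ?_⟩
    rw [inter_inst (instDecidableEqFin 7), insert_inst (instDecidableEqFin 7)]
    have hcard6 : (({0, 1, 2, 3, 4, 5} : Finset (Fin 12))).card = 6 := by decide
    have hsum : (∑ _i ∈ ({0, 1, 2, 3, 4, 5} : Finset (Fin 12)), (1 : ℝ)) = 6 := by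
      rw [Finset.sum_const, hcard6]; norm_num
    have hcardV : ((Fintype.card (Fin 12) : ℕ) : ℝ) = 12 := by simp
    rw [hsum, hcardV]
    have hunion : unionA A12 ({0, 1, 2, 3, 4, 5} : Finset (Fin 12)) ∩
        ({1, 2, 3, 4, 5, 6} : Finset (Fin 7)) = ({4, 5} : Finset (Fin 7)) := by
      ext c
      simp only [Finset.mem_inter, unionA, Finset.mem_filter, Finset.mem_univ, true_and]
      constructor
      · rintro ⟨⟨i, hi, hci⟩, hcW⟩
        have hi6 : (i : ℕ) < 6 := by fin_cases hi <;> decide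
        have hci' : c = 0 ∨ c = 4 ∨ c = 5 := by
          by_cases h3' : (i : ℕ) < 3
          · rw [show A12 i = {0, 4} by simp [A12, h3']] at hci
            simp only [Finset.mem_insert, Finset.mem_singleton] at hci
            tauto
          · rw [show A12 i = {0, 5} by simp [A12, h3', hi6]] at hci
            simp only [Finset.mem_insert, Finset.mem_singleton] at hci
            tauto
        rcases hci' with rfl | rfl | rfl
        · exact absurd hcW (by decide)
        · decide
        · decide
      · intro hc
        have hc' : c = 4 ∨ c = 5 := by
          simpa [Finset.mem_insert, Finset.mem_singleton] using hc
        rcases hc' with rfl | rfl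
        · exact ⟨⟨0, by decide, by decide⟩, by decide⟩
        · exact ⟨⟨3, by decide, by decide⟩, by decide⟩
    rw [hunion]
    have hc2 : (({4, 5} : Finset (Fin 7))).card = 2 := by decide
    have hc3 : ((insert (0 : Fin 7) ({4, 5} : Finset (Fin 7)))).card = 3 := by decide
    have hcost2 : cost (fun _ => (1 : ℝ)) ({4, 5} : Finset (Fin 7)) = 2 := by
      simp [cost, hc2]
    have hcost3 : cost (fun _ => (1 : ℝ)) (insert (0 : Fin 7) ({4, 5} : Finset (Fin 7))) = 3 := by
      simp [cost, hc3]
    refine ⟨by rw [hcost2]; norm_num, 0, ?_, by decide, by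
      rw [insert_inst (i1 := fun a b => Classical.propDecidable (a = b)) (instDecidableEqFin 7),
        hcost3]
      norm_num⟩
    simp only [interA, Finset.mem_filter, Finset.mem_univ, true_and]
    intro i hi
    fin_cases hi <;> decide
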